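/- Let X be a convex subset of a real normed vector space and let F : X × X → ℝ satisfy (A1) uniform α-strong convexity in the second argument and (A3) uniform β-Lipschitz continuity of ∇₂F in the first argument; set θ = β/α. Let (x_n) be the value-aggregation sequence: x₁ ∈ X and x_{n+1} ∈ argmin_{x∈X} Σ_{k=1}^n F(x_k, x), and define S_n = (Σ_{k=1}^{n−1} ‖x_n − x_k‖)/(n−1) for n ≥ 2. Then for all n ≥ 2, S_{n+1} ≤ (1 − (1−θ)/n) S_n. -/

import Mathlib

open Filter Set Topology

lemma fo_aux {E : Type*} [NormedAddCommGroup E] [NormedSpace ℝ E]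
    {X : Set E} (hX : Convex ℝ X) {f : E → ℝ} {f' : E →L[ℝ] ℝ} {a : E}
    (ha : a ∈ X) (hd : HasFDerivWithinAt f f' X a)
    (hmin : ∀ y ∈ X, f a ≤ f y) {y : E} (hy : y ∈ X) : 0 ≤ f' (y - a) := by
  set γ : ℝ → E := fun t => a + t • (y - a) with hγdef
  have hmap : MapsTo γ (Icc (0:ℝ) 1) X := fun t ht => hX.add_smul_sub_mem ha hy ht
  have hγ0 : γ 0 = a := by simp [hγdef]
  have hγderiv : HasDerivAt γ (y - a) 0 := by
    have h1 : HasDerivAt (fun t : ℝ => t • (y - a)) ((1:ℝ) • (y - a)) 0 :=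
      (hasDerivAt_id (0:ℝ)).smul_const (y - a)
    have h1' := h1.const_add a
    simp only [one_smul] at h1'
    exact h1'
  have hcomp : HasDerivWithinAt (f ∘ γ) (f' (y - a)) (Icc (0:ℝ) 1) 0 :=
    (hγ0 ▸ hd).comp_hasDerivWithinAt 0 hγderiv.hasDerivWithinAt hmap
  have hslope : Tendsto (slope (f ∘ γ) 0) (𝓝[Icc (0:ℝ) 1 \ {0}] 0) (𝓝 (f' (y - a))) :=
    hasDerivWithinAt_iff_tendsto_slope.mp hcomp
  have hset : Icc (0:ℝ) 1 \ {0} = Ioc (0:ℝ) 1 := by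
    ext t
    simp only [mem_diff, mem_Icc, mem_singleton_iff, mem_Ioc]
    constructor
    · rintro ⟨⟨h1, h2⟩, h3⟩; exact ⟨lt_of_le_of_ne h1 (Ne.symm h3), h2⟩
    · rintro ⟨h1, h2⟩; exact ⟨⟨le_of_lt h1, h2⟩, ne_of_gt h1⟩
  rw [hset] at hslope
  have hne : (𝓝[Ioc (0:ℝ) 1] 0).NeBot := by
    rw [nhdsWithin_Ioc_eq_nhdsGT (by norm_num : (0:ℝ) < 1)]
    infer_instance
  refine ge_of_tendsto hslope ?_
  filter_upwards [self_mem_nhdsWithin] with t ht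
  have h1 : f a ≤ f (γ t) := hmin _ (hmap ⟨le_of_lt ht.1, ht.2⟩)
  have h2 : slope (f ∘ γ) 0 t = (t - 0)⁻¹ * (f (γ t) - f (γ 0)) := rfl
  rw [h2, hγ0]
  have h3 : (0:ℝ) < t := ht.1
  have h4 : (0:ℝ) ≤ f (γ t) - f a := by linarith
  have h5 : (0:ℝ) ≤ (t - 0)⁻¹ := by rw [sub_zero]; positivity
  exact mul_nonneg h5 h4

set_option maxHeartbeats 2000000 in
/-- One-step recursion for the concentration quantity `S_n`.
Under (A1) uniform `α`-strong convexity in the second argument and (A3) uniform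
`β`-Lipschitzness of `∇₂F` in the first argument, with `θ = β/α`, the
Follow-the-Leader iterates satisfy `S_{n+1} ≤ (1 − (1−θ)/n) S_n` for all `n ≥ 2`. -/
theorem stmt_6
    {E : Type*} [NormedAddCommGroup E] [NormedSpace ℝ E]
    (X : Set E) (hX : Convex ℝ X)
    (F : E → E → ℝ) (D2F : E → E → (E →L[ℝ] ℝ))
    (α β θ : ℝ) (hα : 0 < α) (hβ : 0 ≤ β) (hθ : θ = β / α)
    (hgrad : ∀ z ∈ X, ∀ y ∈ X, HasFDerivWithinAt (F z) (D2F z y) X y)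
    (hA1 : ∀ z ∈ X, ∀ y ∈ X, ∀ x ∈ X,
      F z x ≥ F z y + D2F z y (x - y) + α / 2 * ‖x - y‖ ^ 2)
    (hA3 : ∀ x ∈ X, ∀ y ∈ X, ∀ z ∈ X, ‖D2F x z - D2F y z‖ ≤ β * ‖x - y‖)
    (x : ℕ → E) (hmem : ∀ n, 1 ≤ n → x n ∈ X)
    (hftl : ∀ n, 1 ≤ n → ∀ y ∈ X,
      ∑ k ∈ Finset.Icc 1 n, F (x k) (x (n + 1)) ≤ ∑ k ∈ Finset.Icc 1 n, F (x k) y)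
    (S : ℕ → ℝ)
    (hS : ∀ n, 2 ≤ n →
      S n = (∑ k ∈ Finset.Icc 1 (n - 1), ‖x n - x k‖) / ((n : ℝ) - 1)) :
    ∀ n, 2 ≤ n → S (n + 1) ≤ (1 - (1 - θ) / (n : ℝ)) * S n := by
  intro n hn
  obtain ⟨m, rfl⟩ : ∃ m, n = m + 2 := ⟨n - 2, by omega⟩
  set M : ℝ := (m : ℝ) with hM
  have ha : x (m + 2) ∈ X := hmem _ (by omega)
  have hb : x (m + 3) ∈ X := hmem _ (by omega)
  have hxk : ∀ k ∈ Finset.Icc 1 (m + 1), x k ∈ X := fun k hk =>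
    hmem k (Finset.mem_Icc.mp hk).1
  have hxk2 : ∀ k ∈ Finset.Icc 1 (m + 2), x k ∈ X := fun k hk =>
    hmem k (Finset.mem_Icc.mp hk).1
  set v : E := x (m + 3) - x (m + 2) with hv
  set δ : ℝ := ‖x (m + 3) - x (m + 2)‖ with hδ
  set Sig0 : ℝ := ∑ k ∈ Finset.Icc 1 (m + 1), ‖x (m + 2) - x k‖ with hSig0
  have hδ0 : 0 ≤ δ := norm_nonneg _
  have hSnn : 0 ≤ Sig0 := Finset.sum_nonneg fun k _ => norm_nonneg _
  have hθ0 : 0 ≤ θ := hθ ▸ div_nonneg hβ hα.le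
  -- strong monotonicity of the gradient, from (A1)
  have mono : ∀ z ∈ X, α * δ ^ 2 ≤ D2F z (x (m + 3)) v - D2F z (x (m + 2)) v := by
    intro z hz
    have h1 := hA1 z hz (x (m + 2)) ha (x (m + 3)) hb
    have h2 := hA1 z hz (x (m + 3)) hb (x (m + 2)) ha
    rw [show x (m + 2) - x (m + 3) = -(x (m + 3) - x (m + 2)) from (neg_sub _ _).symm,
      map_neg, norm_neg] at h2
    rw [← hv, ← hδ] at h1 h2
    linarith
  -- first-order optimality at `x (m+2)`
  have hd1 : HasFDerivWithinAt (fun y => ∑ k ∈ Finset.Icc 1 (m + 1), F (x k) y)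
      (∑ k ∈ Finset.Icc 1 (m + 1), D2F (x k) (x (m + 2))) X (x (m + 2)) :=
    HasFDerivWithinAt.fun_sum fun k hk => hgrad (x k) (hxk k hk) _ ha
  have hopt1 := fo_aux hX ha hd1 (fun y hy => hftl (m + 1) (by omega) y hy) hb
  rw [ContinuousLinearMap.sum_apply] at hopt1
  -- first-order optimality at `x (m+3)`
  have hd2 : HasFDerivWithinAt (fun y => ∑ k ∈ Finset.Icc 1 (m + 2), F (x k) y)
      (∑ k ∈ Finset.Icc 1 (m + 2), D2F (x k) (x (m + 3))) X (x (m + 3)) :=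
    HasFDerivWithinAt.fun_sum fun k hk => hgrad (x k) (hxk2 k hk) _ hb
  have hopt2 := fo_aux hX hb hd2 (fun y hy => hftl (m + 2) (by omega) y hy) ha
  rw [ContinuousLinearMap.sum_apply] at hopt2
  have hB : ∑ k ∈ Finset.Icc 1 (m + 2), D2F (x k) (x (m + 3)) v ≤ 0 := by
    have e : ∀ k ∈ Finset.Icc 1 (m + 2),
        D2F (x k) (x (m + 3)) (x (m + 2) - x (m + 3)) = -(D2F (x k) (x (m + 3)) v) := by
      intro k _
      rw [show x (m + 2) - x (m + 3) = -(x (m + 3) - x (m + 2)) from (neg_sub _ _).symm,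
        map_neg, ← hv]
    rw [Finset.sum_congr rfl e, Finset.sum_neg_distrib] at hopt2
    linarith
  rw [Finset.sum_Icc_succ_top (by omega : 1 ≤ m + 2)] at hB
  set Asum : ℝ := ∑ k ∈ Finset.Icc 1 (m + 1), D2F (x k) (x (m + 2)) v with hAsum
  set Bsum : ℝ := ∑ k ∈ Finset.Icc 1 (m + 1), D2F (x k) (x (m + 3)) v with hBsum
  set t0 : ℝ := D2F (x (m + 2)) (x (m + 2)) v with ht0
  set t1 : ℝ := D2F (x (m + 2)) (x (m + 3)) v with ht1
  -- monotonicity summed over k ≤ m+1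
  have h5 : Asum + (M + 1) * (α * δ ^ 2) ≤ Bsum := by
    have hterm : ∀ k ∈ Finset.Icc 1 (m + 1),
        D2F (x k) (x (m + 2)) v + α * δ ^ 2 ≤ D2F (x k) (x (m + 3)) v := by
      intro k hk
      have := mono (x k) (hxk k hk)
      linarith
    calc Asum + (M + 1) * (α * δ ^ 2)
        = ∑ k ∈ Finset.Icc 1 (m + 1), (D2F (x k) (x (m + 2)) v + α * δ ^ 2) := by
          rw [Finset.sum_add_distrib, Finset.sum_const, Nat.card_Icc]
          push_cast [hM]
          ring
      _ ≤ Bsum := Finset.sum_le_sum hterm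
  -- (A3) summed over k ≤ m+1
  have h6 : Asum ≤ (M + 1) * t0 + β * δ * Sig0 := by
    have hterm : ∀ k ∈ Finset.Icc 1 (m + 1),
        D2F (x k) (x (m + 2)) v ≤ t0 + β * ‖x (m + 2) - x k‖ * δ := by
      intro k hk
      have h := hA3 (x k) (hxk k hk) (x (m + 2)) ha (x (m + 2)) ha
      have h2 : ‖(D2F (x k) (x (m + 2)) - D2F (x (m + 2)) (x (m + 2))) v‖
          ≤ (β * ‖x k - x (m + 2)‖) * ‖v‖ :=
        le_trans (ContinuousLinearMap.le_opNorm _ _)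
          (mul_le_mul_of_nonneg_right h (norm_nonneg _))
      rw [ContinuousLinearMap.sub_apply, Real.norm_eq_abs] at h2
      have h3 := le_trans (le_abs_self _) h2
      rw [norm_sub_rev (x k) (x (m + 2))] at h3
      have hvδ : ‖v‖ = δ := rfl
      rw [hvδ] at h3
      rw [← ht0] at h3
      linarith
    calc Asum ≤ ∑ k ∈ Finset.Icc 1 (m + 1), (t0 + β * ‖x (m + 2) - x k‖ * δ) :=
          Finset.sum_le_sum hterm
      _ = (M + 1) * t0 + β * δ * Sig0 := by
          rw [Finset.sum_add_distrib, Finset.sum_const, Nat.card_Icc]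
          have : ∑ k ∈ Finset.Icc 1 (m + 1), β * ‖x (m + 2) - x k‖ * δ
              = β * δ * Sig0 := by
            rw [hSig0, Finset.mul_sum]
            exact Finset.sum_congr rfl fun k _ => by ring
          rw [this]
          push_cast [hM]
          ring
  have h7 : t0 + α * δ ^ 2 ≤ t1 := by have := mono (x (m + 2)) ha; linarith
  -- key quadratic bound
  have hkey : (M + 1) * (M + 2) * (α * δ ^ 2) ≤ β * δ * Sig0 := by
    have hM1 : (0:ℝ) ≤ M + 1 := by positivity
    have e1 : (M + 1) * t1 ≤ (M + 1) * (-(Asum + (M + 1) * (α * δ ^ 2)) + Asum) := by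
      apply mul_le_mul_of_nonneg_left _ hM1
      linarith
    have e2 : (M + 1) * (t0 + α * δ ^ 2) ≤ (M + 1) * t1 :=
      mul_le_mul_of_nonneg_left h7 hM1
    nlinarith [hopt1, e1, e2, h6]
  -- step-size bound
  have hd2' : (M + 1) * ((M + 2) * δ) ≤ θ * Sig0 := by
    rcases eq_or_lt_of_le hδ0 with h | h
    · rw [← h]
      have : (0:ℝ) ≤ θ * Sig0 := mul_nonneg hθ0 hSnn
      linarith
    · rw [hθ, div_mul_eq_mul_div, le_div_iff₀ hα]
      nlinarith [hkey, h]
  -- triangle inequality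
  have htri : ∑ k ∈ Finset.Icc 1 (m + 2), ‖x (m + 3) - x k‖ ≤ Sig0 + (M + 2) * δ := by
    rw [Finset.sum_Icc_succ_top (by omega : 1 ≤ m + 2)]
    have hterm : ∀ k ∈ Finset.Icc 1 (m + 1),
        ‖x (m + 3) - x k‖ ≤ ‖x (m + 2) - x k‖ + δ := by
      intro k _
      have h := dist_triangle (x (m + 3)) (x (m + 2)) (x k)
      simp only [dist_eq_norm] at h
      rw [← hδ] at h
      linarith
    calc (∑ k ∈ Finset.Icc 1 (m + 1), ‖x (m + 3) - x k‖) + ‖x (m + 3) - x (m + 2)‖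
        ≤ (∑ k ∈ Finset.Icc 1 (m + 1), (‖x (m + 2) - x k‖ + δ)) + δ :=
          add_le_add (Finset.sum_le_sum hterm) (le_of_eq rfl)
      _ = Sig0 + (M + 2) * δ := by
          rw [Finset.sum_add_distrib, Finset.sum_const, Nat.card_Icc, hSig0]
          push_cast [hM]
          ring
  -- final algebra
  rw [hS (m + 2 + 1) (by omega), hS (m + 2) (by omega)]
  have hred1 : m + 2 + 1 - 1 = m + 2 := by omega
  have hred2 : m + 2 - 1 = m + 1 := by omega
  rw [hred1, hred2]
  simp only [show m + 2 + 1 = m + 3 from rfl]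
  rw [← hSig0]
  push_cast [hM]
  have hM1 : (0:ℝ) < M + 1 := by positivity
  have hM2 : (0:ℝ) < M + 2 := by positivity
  have hne1 : (M + 1) ≠ 0 := ne_of_gt hM1
  have hne2 : (M + 2) ≠ 0 := ne_of_gt hM2
  have estep : 1 - (1 - θ) / (M + 2) = (M + 1 + θ) / (M + 2) := by
    field_simp
    ring
  have efinal : (1 - (1 - θ) / (M + 2)) * (Sig0 / (M + 1))
      = ((M + 1 + θ) * Sig0) / ((M + 1) * (M + 2)) := by
    rw [estep, div_mul_div_comm, mul_comm (M + 2) (M + 1)]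
  rw [show ((m:ℝ) + 3 - 1 : ℝ) = M + 2 by rw [hM]; ring]
  rw [show ((m:ℝ) + 2 - 1 : ℝ) = M + 1 by rw [hM]; ring]
  rw [efinal, div_le_div_iff₀ hM2 (by positivity)]
  have p1 : (M + 1) * (∑ k ∈ Finset.Icc 1 (m + 2), ‖x (m + 3) - x k‖)
      ≤ (M + 1) * (Sig0 + (M + 2) * δ) := mul_le_mul_of_nonneg_left htri hM1.le
  nlinarith [p1, hd2', hM2, hSnn]
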